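/- Let W be a real d1×d2 matrix with singular value decomposition W = U D V^T where D = diag(d_1,...,d_r) contains the singular values. For λ1 ≥ 0 and λ2 ≥ 0, the unique minimizer over Z of (1/2)‖Z−W‖_F² + λ1‖Z‖_N + (λ2/2)‖Z‖_F² is given by S(W;λ1,λ2) = U D_{λ1,λ2} V^T where D_{λ1,λ2} = diag((d_1−λ1)_+,...,(d_r−λ1)_+)/(1+λ2). -/

import Mathlib

open Matrix

noncomputable def frobNorm {m n : ℕ} (M : Matrix (Fin m) (Fin n) ℝ) : ℝ :=
  Real.sqrt (Matrix.trace (Mᵀ * M))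

noncomputable def nuclearNorm {m n : ℕ} (M : Matrix (Fin m) (Fin n) ℝ) : ℝ :=
  ∑ i, Real.sqrt ((Matrix.isHermitian_conjTranspose_mul_self M).eigenvalues i)

noncomputable def spectralNorm' {m n : ℕ} (M : Matrix (Fin m) (Fin n) ℝ) : ℝ :=
  ⨆ i, Real.sqrt ((Matrix.isHermitian_conjTranspose_mul_self M).eigenvalues i)

noncomputable def mip {m n : ℕ} (A B : Matrix (Fin m) (Fin n) ℝ) : ℝ :=
  Matrix.trace (Aᵀ * B)

section Helpers

lemma mip_eq_sum {m n : ℕ} (A B : Matrix (Fin m) (Fin n) ℝ) :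
    mip A B = ∑ j, ∑ i, A i j * B i j := by
  simp [mip, Matrix.trace, Matrix.diag, Matrix.mul_apply]

lemma mip_self_nonneg {m n : ℕ} (A : Matrix (Fin m) (Fin n) ℝ) : 0 ≤ mip A A := by
  rw [mip_eq_sum]
  exact Finset.sum_nonneg fun j _ => Finset.sum_nonneg fun i _ => mul_self_nonneg _

lemma mip_self_pos {m n : ℕ} (A : Matrix (Fin m) (Fin n) ℝ) (hA : A ≠ 0) : 0 < mip A A := by
  obtain ⟨i, j, hij⟩ : ∃ i j, A i j ≠ 0 := by
    by_contra h
    push_neg at h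
    exact hA (by ext i j; simp [h])
  rw [mip_eq_sum]
  have : 0 < ∑ i, A i j * A i j :=
    Finset.sum_pos' (fun i _ => mul_self_nonneg _) ⟨i, Finset.mem_univ i, mul_self_pos.mpr hij⟩
  exact Finset.sum_pos' (fun j _ => Finset.sum_nonneg fun i _ => mul_self_nonneg _)
    ⟨j, Finset.mem_univ j, this⟩

lemma mip_comm {m n : ℕ} (A B : Matrix (Fin m) (Fin n) ℝ) : mip A B = mip B A := by
  rw [mip, mip, ← Matrix.trace_transpose, Matrix.transpose_mul, Matrix.transpose_transpose]

lemma mip_sub_left {m n : ℕ} (A B C : Matrix (Fin m) (Fin n) ℝ) :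
    mip (A - B) C = mip A C - mip B C := by
  simp [mip, Matrix.transpose_sub, Matrix.sub_mul]

lemma mip_sub_right {m n : ℕ} (A B C : Matrix (Fin m) (Fin n) ℝ) :
    mip A (B - C) = mip A B - mip A C := by
  simp [mip, Matrix.mul_sub]

lemma mip_smul_left {m n : ℕ} (a : ℝ) (A B : Matrix (Fin m) (Fin n) ℝ) :
    mip (a • A) B = a * mip A B := by
  simp [mip, Matrix.transpose_smul, Matrix.smul_mul]

lemma dot_self_nonneg' {k : ℕ} (x : Fin k → ℝ) : 0 ≤ x ⬝ᵥ x :=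
  Finset.sum_nonneg fun i _ => mul_self_nonneg _

lemma dot_sq_le {k : ℕ} (x y : Fin k → ℝ) : (x ⬝ᵥ y) ^ 2 ≤ (x ⬝ᵥ x) * (y ⬝ᵥ y) := by
  have := Finset.sum_mul_sq_le_sq_mul_sq Finset.univ x y
  simpa [dotProduct, sq] using this

lemma contract {m n : ℕ} (P : Matrix (Fin m) (Fin n) ℝ) (e : Fin n → ℝ)
    (he : ∀ j, e j = 0 ∨ e j = 1) (hP : Pᵀ * P = diagonal e) (u : Fin m → ℝ) :
    (Pᵀ *ᵥ u) ⬝ᵥ (Pᵀ *ᵥ u) ≤ u ⬝ᵥ u := by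
  set y := Pᵀ *ᵥ u with hy
  have hy0 : ∀ j, e j = 0 → y j = 0 := by
    intro j hj
    have hcol : ∑ i, P i j * P i j = 0 := by
      have := congrFun (congrFun hP j) j
      simpa [Matrix.mul_apply, Matrix.diagonal, hj] using this
    have hPz : ∀ i, P i j = 0 := by
      intro i
      have := (Finset.sum_eq_zero_iff_of_nonneg (fun i _ => mul_self_nonneg (P i j))).mp hcol i
        (Finset.mem_univ i)
      nlinarith [this]
    simp [hy, Matrix.mulVec, dotProduct, hPz]
  have h1 : (P *ᵥ y) ⬝ᵥ (P *ᵥ y) = y ⬝ᵥ y := by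
    have e1 : (P *ᵥ y) ⬝ᵥ (P *ᵥ y) = ((Pᵀ * P) *ᵥ y) ⬝ᵥ y := by
      rw [Matrix.dotProduct_mulVec, ← Matrix.mulVec_transpose, Matrix.mulVec_mulVec]
    rw [e1, hP, dotProduct_comm]
    simp only [dotProduct, Matrix.mulVec_diagonal]
    refine Finset.sum_congr rfl fun j _ => ?_
    rcases he j with h | h
    · simp [h, hy0 j h]
    · simp [h]
  have h2 : y ⬝ᵥ y = u ⬝ᵥ (P *ᵥ y) := by
    rw [Matrix.dotProduct_mulVec, ← Matrix.mulVec_transpose, Matrix.transpose_transpose,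
      dotProduct_comm]
  have hcs := dot_sq_le u (P *ᵥ y)
  rw [h1, ← h2] at hcs
  rcases eq_or_lt_of_le (dot_self_nonneg' y) with h | h
  · rw [← h]; exact dot_self_nonneg' u
  · nlinarith [hcs]

lemma contract_one {m r : ℕ} (V : Matrix (Fin m) (Fin r) ℝ) (hV : Vᵀ * V = 1)
    (u : Fin m → ℝ) : (Vᵀ *ᵥ u) ⬝ᵥ (Vᵀ *ᵥ u) ≤ u ⬝ᵥ u := by
  refine contract V (fun _ => 1) (fun _ => Or.inr rfl) ?_ u
  rw [hV]
  exact (Matrix.diagonal_one).symm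

lemma trace_mul_diag_mul {a b : ℕ} (M : Matrix (Fin a) (Fin b) ℝ)
    (N : Matrix (Fin b) (Fin a) ℝ) (d : Fin b → ℝ) :
    Matrix.trace (M * diagonal d * N) = ∑ j, d j * ((N * M) j j) := by
  rw [Matrix.trace_mul_comm, ← Matrix.mul_assoc, Matrix.trace]
  exact Finset.sum_congr rfl fun j _ => by simp [Matrix.diag, Matrix.mul_diagonal, mul_comm]

lemma nuclear_decomp {m n : ℕ} (Z : Matrix (Fin m) (Fin n) ℝ) :
    ∃ (P : Matrix (Fin m) (Fin n) ℝ) (Q : Matrix (Fin n) (Fin n) ℝ) (sig e : Fin n → ℝ),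
      Z = P * diagonal sig * Qᵀ ∧ (∀ j, 0 ≤ sig j) ∧ nuclearNorm Z = ∑ j, sig j ∧
      Matrix.trace (Pᵀ * Z * Q) = ∑ j, sig j ∧
      Qᵀ * Q = 1 ∧ Pᵀ * P = diagonal e ∧ (∀ j, e j = 0 ∨ e j = 1) := by
  set hZ := Matrix.isHermitian_conjTranspose_mul_self Z with hhZ
  set μ : Fin n → ℝ := hZ.eigenvalues with hμdef
  set Q : Matrix (Fin n) (Fin n) ℝ := (hZ.eigenvectorUnitary : Matrix (Fin n) (Fin n) ℝ)
    with hQdef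
  have hQ1 : Qᵀ * Q = 1 := by
    have := Matrix.mem_unitaryGroup_iff'.mp hZ.eigenvectorUnitary.2
    simp [Matrix.star_eq_conjTranspose, Matrix.conjTranspose_eq_transpose_of_trivial] at this
    exact this
  have hQ2 : Q * Qᵀ = 1 := by
    have := Matrix.mem_unitaryGroup_iff.mp hZ.eigenvectorUnitary.2
    simp [Matrix.star_eq_conjTranspose, Matrix.conjTranspose_eq_transpose_of_trivial] at this
    exact this
  have hspec : Zᵀ * Z = Q * diagonal μ * Qᵀ := by
    have := hZ.spectral_theorem
    simp [Matrix.star_eq_conjTranspose, Matrix.conjTranspose_eq_transpose_of_trivial,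
      Function.comp] at this
    exact this
  have hμ : ∀ j, 0 ≤ μ j := by
    intro j
    have hpsd : (Zᵀ * Z).PosSemidef := by
      have := Matrix.posSemidef_conjTranspose_mul_self Z
      simpa [Matrix.conjTranspose_eq_transpose_of_trivial] using this
    exact hpsd.eigenvalues_nonneg j
  set A : Matrix (Fin m) (Fin n) ℝ := Z * Q with hAdef
  set sig : Fin n → ℝ := fun j => Real.sqrt (μ j) with hsig
  have hsig0 : ∀ j, 0 ≤ sig j := fun j => Real.sqrt_nonneg _
  have hsigsq : ∀ j, sig j * sig j = μ j := fun j => Real.mul_self_sqrt (hμ j)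
  have hsigne : ∀ j, μ j ≠ 0 → sig j ≠ 0 := by
    intro j hj
    have : 0 < μ j := lt_of_le_of_ne (hμ j) (Ne.symm hj)
    exact ne_of_gt (Real.sqrt_pos.mpr this)
  have hAtA : Aᵀ * A = diagonal μ := by
    have h1 : Aᵀ * A = Qᵀ * (Zᵀ * Z) * Q := by
      simp [hAdef, Matrix.transpose_mul, Matrix.mul_assoc]
    rw [h1, hspec]
    calc Qᵀ * (Q * diagonal μ * Qᵀ) * Q
        = (Qᵀ * Q) * diagonal μ * (Qᵀ * Q) := by simp only [Matrix.mul_assoc]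
      _ = diagonal μ := by rw [hQ1]; simp
  have hcolA : ∀ j k, ∑ i, A i j * A i k = diagonal μ j k := by
    intro j k
    have := congrFun (congrFun hAtA j) k
    simpa [Matrix.mul_apply, mul_comm] using this
  have hAzero : ∀ j, μ j = 0 → ∀ i, A i j = 0 := by
    intro j hj i
    have h0 : ∑ i, A i j * A i j = 0 := by rw [hcolA]; simp [Matrix.diagonal, hj]
    have := (Finset.sum_eq_zero_iff_of_nonneg (fun i _ => mul_self_nonneg (A i j))).mp h0 i
      (Finset.mem_univ i)
    nlinarith [this]
  set P : Matrix (Fin m) (Fin n) ℝ :=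
    Matrix.of (fun i j => if μ j = 0 then 0 else A i j / sig j) with hPdef
  set e : Fin n → ℝ := fun j => if μ j = 0 then 0 else 1 with hedef
  refine ⟨P, Q, sig, e, ?_, hsig0, ?_, ?_, hQ1, ?_, ?_⟩
  · have hA : A = P * diagonal sig := by
      ext i j
      rw [Matrix.mul_diagonal]
      by_cases hj : μ j = 0
      · simp [hPdef, hj, hAzero j hj i]
      · simp [hPdef, hj, div_mul_cancel₀ _ (hsigne j hj)]
    calc Z = Z * (Q * Qᵀ) := by rw [hQ2, Matrix.mul_one]
      _ = A * Qᵀ := by rw [← Matrix.mul_assoc]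
      _ = P * diagonal sig * Qᵀ := by rw [hA]
  · rfl
  · have h1 : Pᵀ * Z * Q = Pᵀ * A := by rw [Matrix.mul_assoc]
    rw [h1, Matrix.trace]
    refine Finset.sum_congr rfl fun j _ => ?_
    simp only [Matrix.diag, Matrix.mul_apply, Matrix.transpose_apply]
    by_cases hj : μ j = 0
    · simp [hPdef, hj, hsig, Real.sqrt_eq_zero', hj.le]
    · have : ∀ i, P i j * A i j = A i j * A i j / sig j := by
        intro i; simp [hPdef, hj]; ring
      simp only [this]
      rw [← Finset.sum_div, hcolA]
      simp [Matrix.diagonal, hsig, Real.div_sqrt]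
  · ext j k
    simp only [Matrix.mul_apply, Matrix.transpose_apply]
    by_cases hj : μ j = 0
    · simp [hPdef, hj, Matrix.diagonal, hedef]
    · by_cases hk : μ k = 0
      · have hjk : j ≠ k := fun h => hj (h ▸ hk)
        simp [hPdef, hk, Matrix.diagonal, hedef, hjk]
      · have : ∀ i, P i j * P i k = A i j * A i k / (sig j * sig k) := by
          intro i; simp [hPdef, hj, hk]; ring
        simp only [this]
        rw [← Finset.sum_div, hcolA]
        by_cases hjk : j = k
        · subst hjk
          simp [Matrix.diagonal, hedef, hj, hsigsq j]
        · simp [Matrix.diagonal, hjk, hedef]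
  · intro j
    by_cases hj : μ j = 0 <;> simp [hedef, hj]

end Helpers

section Part2
open Matrix

lemma mulVec_contract {m n r : ℕ} {U : Matrix (Fin m) (Fin r) ℝ} {V : Matrix (Fin n) (Fin r) ℝ}
    {c : Fin r → ℝ} {b : ℝ} (hU : Uᵀ * U = 1) (hV : Vᵀ * V = 1) (hc : ∀ i, c i ^ 2 ≤ b ^ 2)
    (x : Fin n → ℝ) :
    ((U * diagonal c * Vᵀ) *ᵥ x) ⬝ᵥ ((U * diagonal c * Vᵀ) *ᵥ x) ≤ b ^ 2 * (x ⬝ᵥ x) := by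
  have hGx : (U * diagonal c * Vᵀ) *ᵥ x = U *ᵥ (diagonal c *ᵥ (Vᵀ *ᵥ x)) := by
    rw [← Matrix.mulVec_mulVec, ← Matrix.mulVec_mulVec]
  rw [hGx]
  set u := Vᵀ *ᵥ x with hu
  set w := diagonal c *ᵥ u with hw
  have hUw : (U *ᵥ w) ⬝ᵥ (U *ᵥ w) = w ⬝ᵥ w := by
    rw [Matrix.dotProduct_mulVec, ← Matrix.mulVec_transpose, Matrix.mulVec_mulVec, hU,
      Matrix.one_mulVec]
  have hwle : w ⬝ᵥ w ≤ b ^ 2 * (u ⬝ᵥ u) := by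
    simp only [hw, dotProduct, Matrix.mulVec_diagonal]
    rw [Finset.mul_sum]
    refine Finset.sum_le_sum fun j _ => ?_
    have := hc j
    nlinarith [mul_self_nonneg (u j)]
  have hule : u ⬝ᵥ u ≤ x ⬝ᵥ x := contract_one V hV x
  rw [hUw]
  calc w ⬝ᵥ w ≤ b ^ 2 * (u ⬝ᵥ u) := hwle
    _ ≤ b ^ 2 * (x ⬝ᵥ x) := mul_le_mul_of_nonneg_left hule (sq_nonneg b)

lemma mip_le_nuclear {m n r : ℕ} (U : Matrix (Fin m) (Fin r) ℝ) (V : Matrix (Fin n) (Fin r) ℝ)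
    (c : Fin r → ℝ) (b : ℝ) (hb : 0 ≤ b) (hU : Uᵀ * U = 1) (hV : Vᵀ * V = 1)
    (hc : ∀ i, c i ^ 2 ≤ b ^ 2) (Z : Matrix (Fin m) (Fin n) ℝ) :
    mip (U * diagonal c * Vᵀ) Z ≤ b * nuclearNorm Z := by
  obtain ⟨P, Q, sig, e, hZdec, hsig0, hN, htr, hQ1, hPtP, he⟩ := nuclear_decomp Z
  set G := U * diagonal c * Vᵀ with hG
  have key : mip G Z = ∑ j, sig j * ((G *ᵥ (fun i => Q i j)) ⬝ᵥ (fun i => P i j)) := by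
    have hshape : Gᵀ * Z = (Gᵀ * P) * diagonal sig * Qᵀ := by
      rw [hZdec]; simp only [Matrix.mul_assoc]
    rw [mip, hshape, trace_mul_diag_mul]
    refine Finset.sum_congr rfl fun j _ => ?_
    congr 1
    simp only [Matrix.mul_apply, Matrix.transpose_apply, Matrix.mulVec, dotProduct,
      Finset.sum_mul, Finset.mul_sum]
    rw [Finset.sum_comm]
    exact Finset.sum_congr rfl fun i _ => Finset.sum_congr rfl fun k _ => by ring
  rw [key, hN, Finset.mul_sum]
  refine Finset.sum_le_sum fun j _ => ?_
  have hq : (fun i => Q i j) ⬝ᵥ (fun i => Q i j) = 1 := by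
    have := congrFun (congrFun hQ1 j) j
    simpa [Matrix.mul_apply, dotProduct, Matrix.one_apply] using this
  have hp : (fun i => P i j) ⬝ᵥ (fun i => P i j) ≤ 1 := by
    have := congrFun (congrFun hPtP j) j
    simp only [Matrix.mul_apply, Matrix.transpose_apply, Matrix.diagonal_apply_eq] at this
    rw [dotProduct]
    rw [this]
    rcases he j with h | h <;> simp [h]
  have h1 := mulVec_contract hU hV hc (fun i => Q i j)
  rw [hq, mul_one] at h1
  have h2 := dot_sq_le (G *ᵥ fun i => Q i j) (fun i => P i j)
  have ht : (G *ᵥ fun i => Q i j) ⬝ᵥ (fun i => P i j) ≤ b := by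
    nlinarith [dot_self_nonneg' (G *ᵥ fun i => Q i j), dot_self_nonneg' (fun i => P i j)]
  calc sig j * ((G *ᵥ fun i => Q i j) ⬝ᵥ fun i => P i j) ≤ sig j * b :=
        mul_le_mul_of_nonneg_left ht (hsig0 j)
    _ = b * sig j := mul_comm _ _

lemma nuclear_le_sum {m n r : ℕ} (U : Matrix (Fin m) (Fin r) ℝ) (V : Matrix (Fin n) (Fin r) ℝ)
    (s : Fin r → ℝ) (hU : Uᵀ * U = 1) (hV : Vᵀ * V = 1) (hs : ∀ i, 0 ≤ s i) :
    nuclearNorm (U * diagonal s * Vᵀ) ≤ ∑ i, s i := by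
  set S := U * diagonal s * Vᵀ with hSdef
  obtain ⟨P, Q, sig, e, hdec, hsig0, hN, htr, hQ1, hPtP, he⟩ := nuclear_decomp S
  rw [hN, ← htr]
  have hshape : Pᵀ * S * Q = (Pᵀ * U) * diagonal s * (Vᵀ * Q) := by
    rw [hSdef]; simp only [Matrix.mul_assoc]
  rw [hshape, trace_mul_diag_mul]
  refine Finset.sum_le_sum fun i _ => ?_
  have hentry : ((Vᵀ * Q) * (Pᵀ * U)) i i
      = (Qᵀ *ᵥ fun j => V j i) ⬝ᵥ (Pᵀ *ᵥ fun j => U j i) := by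
    simp only [Matrix.mul_apply, Matrix.transpose_apply, Matrix.mulVec, dotProduct]
    refine Finset.sum_congr rfl fun k _ => ?_
    congr 1
    exact Finset.sum_congr rfl fun j _ => by ring
  have hv : (fun j => V j i) ⬝ᵥ (fun j => V j i) = 1 := by
    have := congrFun (congrFun hV i) i
    simpa [Matrix.mul_apply, dotProduct, Matrix.one_apply] using this
  have hu : (fun j => U j i) ⬝ᵥ (fun j => U j i) = 1 := by
    have := congrFun (congrFun hU i) i
    simpa [Matrix.mul_apply, dotProduct, Matrix.one_apply] using this
  have h1 : (Qᵀ *ᵥ fun j => V j i) ⬝ᵥ (Qᵀ *ᵥ fun j => V j i) ≤ 1 := by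
    have := contract_one Q hQ1 (fun j => V j i)
    rwa [hv] at this
  have h2 : (Pᵀ *ᵥ fun j => U j i) ⬝ᵥ (Pᵀ *ᵥ fun j => U j i) ≤ 1 := by
    have := contract P e he hPtP (fun j => U j i)
    rwa [hu] at this
  have hcs := dot_sq_le (Qᵀ *ᵥ fun j => V j i) (Pᵀ *ᵥ fun j => U j i)
  have ht : ((Vᵀ * Q) * (Pᵀ * U)) i i ≤ 1 := by
    rw [hentry]
    nlinarith [dot_self_nonneg' (Qᵀ *ᵥ fun j => V j i), dot_self_nonneg' (Pᵀ *ᵥ fun j => U j i)]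
  calc s i * ((Vᵀ * Q) * (Pᵀ * U)) i i ≤ s i * 1 := mul_le_mul_of_nonneg_left ht (hs i)
    _ = s i := mul_one _

lemma mip_sandwich {m n r : ℕ} (U : Matrix (Fin m) (Fin r) ℝ) (V : Matrix (Fin n) (Fin r) ℝ)
    (c s : Fin r → ℝ) (hU : Uᵀ * U = 1) (hV : Vᵀ * V = 1) :
    mip (U * diagonal c * Vᵀ) (U * diagonal s * Vᵀ) = ∑ i, c i * s i := by
  have htr : (U * diagonal c * Vᵀ)ᵀ * (U * diagonal s * Vᵀ)
      = V * diagonal (fun i => c i * s i) * Vᵀ := by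
    have h1 : (U * diagonal c * Vᵀ)ᵀ = V * diagonal c * Uᵀ := by
      simp [Matrix.transpose_mul, Matrix.diagonal_transpose, Matrix.mul_assoc]
    rw [h1]
    calc V * diagonal c * Uᵀ * (U * diagonal s * Vᵀ)
        = V * (diagonal c * ((Uᵀ * U) * (diagonal s * Vᵀ))) := by simp only [Matrix.mul_assoc]
      _ = V * (diagonal c * (diagonal s * Vᵀ)) := by rw [hU, Matrix.one_mul]
      _ = V * ((diagonal c * diagonal s) * Vᵀ) := by rw [Matrix.mul_assoc]
      _ = V * diagonal (fun i => c i * s i) * Vᵀ := by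
          rw [Matrix.diagonal_mul_diagonal, Matrix.mul_assoc]
  rw [mip, htr, trace_mul_diag_mul]
  refine Finset.sum_congr rfl fun i _ => ?_
  have : (Vᵀ * V) i i = 1 := by rw [hV]; simp
  rw [this, mul_one]

end Part2

/-- The scaled soft-thresholding SVD uniquely minimizes the spectrum elastic net objective. -/
theorem stmt0 {d1 d2 r : ℕ}
    (W : Matrix (Fin d1) (Fin d2) ℝ)
    (U : Matrix (Fin d1) (Fin r) ℝ) (V : Matrix (Fin d2) (Fin r) ℝ) (dv : Fin r → ℝ)
    (hU : Uᵀ * U = 1) (hV : Vᵀ * V = 1) (hdv : ∀ i, 0 < dv i)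
    (hW : W = U * Matrix.diagonal dv * Vᵀ)
    (lam1 lam2 : ℝ) (hl1 : 0 ≤ lam1) (hl2 : 0 ≤ lam2)
    (S : Matrix (Fin d1) (Fin d2) ℝ)
    (hS : S = U * Matrix.diagonal (fun i => max (dv i - lam1) 0 / (1 + lam2)) * Vᵀ) :
    ∀ Z : Matrix (Fin d1) (Fin d2) ℝ, Z ≠ S →
      frobNorm (S - W) ^ 2 / 2 + lam1 * nuclearNorm S + lam2 / 2 * frobNorm S ^ 2
        < frobNorm (Z - W) ^ 2 / 2 + lam1 * nuclearNorm Z + lam2 / 2 * frobNorm Z ^ 2 := by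
  intro Z hZS
  have ha : (0:ℝ) < 1 + lam2 := by linarith
  set sv : Fin r → ℝ := fun i => max (dv i - lam1) 0 / (1 + lam2) with hsv
  have hsv0 : ∀ i, 0 ≤ sv i := fun i => div_nonneg (le_max_right _ _) ha.le
  -- F1 : W - (1+lam2) • S = U * diagonal (min dv lam1) * Vᵀ
  have hasv : ∀ i, (1 + lam2) * sv i = max (dv i - lam1) 0 := by
    intro i
    simp only [hsv]; rw [mul_comm]; exact div_mul_cancel₀ _ ha.ne'
  have F1 : W - (1 + lam2) • S = U * Matrix.diagonal (fun i => min (dv i) lam1) * Vᵀ := by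
    have hd : Matrix.diagonal dv - (1 + lam2) • Matrix.diagonal sv
        = Matrix.diagonal (fun i => min (dv i) lam1) := by
      ext i j
      by_cases h : i = j
      · subst h
        simp only [Matrix.sub_apply, Matrix.smul_apply, Matrix.diagonal_apply_eq, smul_eq_mul,
          hasv]
        rcases le_total (dv i) lam1 with h | h
        · rw [max_eq_right (by linarith), min_eq_left h, sub_zero]
        · rw [max_eq_left (by linarith), min_eq_right h]
          ring
      · simp [Matrix.diagonal_apply_ne _ h]
    rw [hW, hS, ← Matrix.smul_mul, ← Matrix.mul_smul, ← Matrix.sub_mul, ← Matrix.mul_sub, hd]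
  -- F2 : dual bound
  have F2 : mip (W - (1 + lam2) • S) Z ≤ lam1 * nuclearNorm Z := by
    rw [F1]
    refine mip_le_nuclear U V _ lam1 hl1 hU hV (fun i => ?_) Z
    have h0 : 0 ≤ min (dv i) lam1 := le_min (hdv i).le hl1
    have h1 : min (dv i) lam1 ≤ lam1 := min_le_right _ _
    nlinarith
  -- F3 : value on S
  have F3 : mip (W - (1 + lam2) • S) S = lam1 * ∑ i, sv i := by
    rw [F1, hS, mip_sandwich U V _ _ hU hV, Finset.mul_sum]
    refine Finset.sum_congr rfl fun i _ => ?_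
    rcases le_total (dv i) lam1 with h | h
    · have : sv i = 0 := by simp [hsv, max_eq_right (by linarith : dv i - lam1 ≤ 0)]
      simp [this]
    · rw [min_eq_right h]
  -- F4 : nuclear norm of S bounded by sum of sv
  have F4 : nuclearNorm S ≤ ∑ i, sv i := by
    rw [hS]
    exact nuclear_le_sum U V sv hU hV hsv0
  -- positivity of quadratic gap
  have F5 : 0 < mip (Z - S) (Z - S) := mip_self_pos _ (sub_ne_zero.mpr hZS)
  -- frobenius rewrites
  have hf1 : frobNorm (S - W) ^ 2 = mip (S - W) (S - W) := Real.sq_sqrt (mip_self_nonneg _)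
  have hf2 : frobNorm (Z - W) ^ 2 = mip (Z - W) (Z - W) := Real.sq_sqrt (mip_self_nonneg _)
  have hf3 : frobNorm S ^ 2 = mip S S := Real.sq_sqrt (mip_self_nonneg _)
  have hf4 : frobNorm Z ^ 2 = mip Z Z := Real.sq_sqrt (mip_self_nonneg _)
  rw [hf1, hf2, hf3, hf4]
  -- expansions
  have e1 : mip (S - W) (S - W) = mip S S - 2 * mip W S + mip W W := by
    rw [mip_sub_left, mip_sub_right, mip_sub_right, mip_comm S W]; ring
  have e2 : mip (Z - W) (Z - W) = mip Z Z - 2 * mip W Z + mip W W := by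
    rw [mip_sub_left, mip_sub_right, mip_sub_right, mip_comm Z W]; ring
  have e3 : mip (Z - S) (Z - S) = mip Z Z - 2 * mip S Z + mip S S := by
    rw [mip_sub_left, mip_sub_right, mip_sub_right, mip_comm Z S]; ring
  have e4 : mip (W - (1 + lam2) • S) Z = mip W Z - (1 + lam2) * mip S Z := by
    rw [mip_sub_left, mip_smul_left]
  have e5 : mip (W - (1 + lam2) • S) S = mip W S - (1 + lam2) * mip S S := by
    rw [mip_sub_left, mip_smul_left]
  have hpos1 : 0 < (1 + lam2) / 2 * mip (Z - S) (Z - S) := by positivity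
  have hpos2 : 0 ≤ lam1 * nuclearNorm Z - mip (W - (1 + lam2) • S) Z := by linarith [F2]
  have hpos3 : 0 ≤ mip (W - (1 + lam2) • S) S - lam1 * nuclearNorm S := by
    rw [F3]
    have := mul_le_mul_of_nonneg_left F4 hl1
    linarith
  have hsum : (1 + lam2) / 2 * mip (Z - S) (Z - S)
      + (lam1 * nuclearNorm Z - mip (W - (1 + lam2) • S) Z)
      + (mip (W - (1 + lam2) • S) S - lam1 * nuclearNorm S)
      = (mip (Z - W) (Z - W) / 2 + lam1 * nuclearNorm Z + lam2 / 2 * mip Z Z)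
        - (mip (S - W) (S - W) / 2 + lam1 * nuclearNorm S + lam2 / 2 * mip S S) := by
    rw [e1, e2, e3, e4, e5]; ring
  linarith [hsum, hpos1, hpos2, hpos3]
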